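/- arXiv:1211.6593 — 3 statements merged into one kernel-verified Lean document; each statement's English description precedes it below -/
import Mathlib

section
/- Let S be a commutative semigroup with zero and let Γ(S) be its zero-divisor graph. If x is a vertex of Γ(S) and there exists a vertex y with d(x,y) = 3 (graph distance in Γ(S)), then x² ≠ 0 in S. -/
/-- A zero-divisor: a nonzero element annihilated by some nonzero element. -/
def IsZeroDivisorElem {S : Type*} [Mul S] [Zero S] (x : S) : Prop :=
  x ≠ 0 ∧ ∃ y : S, y ≠ 0 ∧ x * y = 0

/-- The zero-divisor graph Γ(S) of a commutative semigroup with zero: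
vertices are the nonzero zero-divisors, two distinct vertices adjacent iff their product is 0. -/
def zdGraph (S : Type*) [CommSemigroup S] [Zero S] :
    SimpleGraph {x : S // IsZeroDivisorElem x} where
  Adj a b := a ≠ b ∧ (a : S) * (b : S) = 0
  symm := ⟨by
    rintro a b ⟨h1, h2⟩
    exact ⟨h1.symm, by rwa [mul_comm] at h2⟩⟩
  loopless := ⟨by rintro a ⟨h, _⟩; exact h rfl⟩

/-- An end vertex: a vertex of degree one (exactly one neighbor). -/
def IsEndVertex {V : Type*} (G : SimpleGraph V) (v : V) : Prop :=
  ∃! u, G.Adj v u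

/-- An internal vertex: degree ≥ 2 and no neighbor of degree 1. -/
def IsInternal {V : Type*} (G : SimpleGraph V) (v : V) : Prop :=
  (∃ u, G.Adj v u) ∧ ¬ IsEndVertex G v ∧ ∀ u, G.Adj v u → ¬ IsEndVertex G u

/-- C(a,b): the elements of S that are vertices whose neighborhood is exactly {a, b}. -/
def cSet (S : Type*) [CommSemigroup S] [Zero S]
    (a b : {x : S // IsZeroDivisorElem x}) : Set S :=
  {x : S | ∃ h : IsZeroDivisorElem x, (zdGraph S).neighborSet ⟨x, h⟩ = {a, b}}

/-- T_a: the elements of S that are end vertices adjacent to the vertex a. -/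
def tSet (S : Type*) [CommSemigroup S] [Zero S]
    (a : {x : S // IsZeroDivisorElem x}) : Set S :=
  {x : S | ∃ h : IsZeroDivisorElem x,
    (zdGraph S).Adj ⟨x, h⟩ a ∧ IsEndVertex (zdGraph S) ⟨x, h⟩}

/-- If x is a vertex of Γ(S) and some vertex y is at distance 3 from x, then x² ≠ 0. -/
theorem stmt2 {S : Type*} [CommSemigroup S] [Zero S] (hz : ∀ x : S, 0 * x = 0)
    (x y : {s : S // IsZeroDivisorElem s})
    (h : (zdGraph S).dist x y = 3) :
    (x : S) * (x : S) ≠ 0 := by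
  intro hx2
  have hr : (zdGraph S).Reachable x y := by
    by_contra hnr
    rw [SimpleGraph.dist_eq_zero_of_not_reachable hnr] at h
    omega
  obtain ⟨p, hp⟩ := hr.exists_walk_length_eq_dist
  rw [h] at hp
  -- destructure the walk of length 3
  cases p with
  | nil => simp at hp
  | cons h1 q =>
    rename_i a
    cases q with
    | nil => simp at hp
    | cons h2 r =>
      rename_i b
      cases r with
      | nil => simp at hp
      | cons h3 r' =>
        
        cases r' with
        | nil =>
          clear hp
          obtain ⟨hxa, hxa0⟩ := h1
          obtain ⟨hab, hab0⟩ := h2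
          obtain ⟨hby, hby0⟩ := h3
          -- key: x * b = 0 impossible, and x * y = 0 impossible
          have hxy0 : (x : S) * (y : S) ≠ 0 := by
            intro h0
            have hxy : x ≠ y := by
              intro he; rw [he] at h; simp [SimpleGraph.dist_self] at h
            have : (zdGraph S).dist x y ≤ 1 :=
              SimpleGraph.dist_le ((show (zdGraph S).Adj x y from ⟨hxy, h0⟩).toWalk)
            omega
          have hx0 : (x : S) * 0 = 0 := by rw [mul_comm]; exact hz _
          by_cases hxb : (x : S) * (b : S) = 0
          · -- then x adj b or x = b; either way dist ≤ 2
            by_cases hxbeq : x = b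
            · exact hxy0 (by rw [hxbeq]; exact hby0)
            · have : (zdGraph S).dist x y ≤ 2 :=
                SimpleGraph.dist_le (SimpleGraph.Walk.cons
                  (show (zdGraph S).Adj x b from ⟨hxbeq, hxb⟩)
                  ((show (zdGraph S).Adj b y from ⟨hby, hby0⟩).toWalk))
              omega
          · -- x*b is a vertex adjacent to both x and y
            set s : S := (x : S) * (b : S) with hs
            have hsx : s * (x : S) = 0 := by
              rw [hs, mul_comm (x : S) (b : S), mul_assoc, hx2, mul_comm]; exact hz _
            have hsy : s * (y : S) = 0 := by
              rw [hs, mul_assoc, hby0, hx0]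
            have hsv : IsZeroDivisorElem s :=
              ⟨hxb, (x : S), x.2.1, hsx⟩
            set v : {t : S // IsZeroDivisorElem t} := ⟨s, hsv⟩ with hv
            have hxv : x ≠ v := by
              intro he
              apply hxy0
              have : (x : S) = s := congrArg Subtype.val he
              rw [this]; exact hsy
            have hvc : v ≠ y := by
              intro he
              apply hxy0
              have : s = (y : S) := congrArg Subtype.val he
              rw [← this, mul_comm]; exact hsx
            have hxs : (x : S) * s = 0 := by rw [mul_comm]; exact hsx
            have : (zdGraph S).dist x y ≤ 2 :=
              SimpleGraph.dist_le (SimpleGraph.Walk.cons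
                (show (zdGraph S).Adj x v from ⟨hxv, hxs⟩)
                ((show (zdGraph S).Adj v y from ⟨hvc, hsy⟩).toWalk))
            omega
        | cons h4 r'' => simp at hp
end

section
/- Let S be a commutative semigroup with zero and G = Γ(S). Suppose there exist adjacent vertices a, b, a vertex s with N(s) = {a,b}, and a vertex z with d(s,z) = 3. Then every element c with N(c) = {a,b} satisfies c² ≠ 0, and consequently the annihilator of c equals {0, a, b}. -/
private lemma keyS {S : Type*} [CommSemigroup S] [Zero S] (hz : ∀ x : S, 0 * x = 0)
    (a b c y z : S)
    (annC : ∀ w : S, w * c = 0 → w = 0 ∨ w = a ∨ w = b ∨ w = c)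
    (hy0 : y ≠ 0) (hz0 : z ≠ 0) (hya : y ≠ a)
    (hyz : y * z = 0)
    (hza : z * a = 0 → False) (hzb : z * b = 0 → False)
    (hzea : z ≠ a) (hzeb : z ≠ b) (hzc : z ≠ c)
    (hcc : c * c = 0) : False := by
  have hc0 : c * 0 = 0 := by rw [mul_comm]; exact hz c
  have hzann : z * c = 0 → False := by
    intro h
    rcases annC z h with h' | h' | h' | h'
    exacts [hz0 h', hzea h', hzeb h', hzc h']
  have hcy : (c * y) * c = 0 := by
    rw [mul_right_comm, hcc, hz]
  rcases annC _ hcy with h0 | ha | hb | hc'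
  · have hyc : y * c = 0 := by rw [mul_comm]; exact h0
    rcases annC y hyc with h' | h' | h' | h'
    · exact hy0 h'
    · exact hya h'
    · exact hzb (by rw [mul_comm, ← h']; exact hyz)
    · exact hzann (by rw [mul_comm, ← h']; exact hyz)
  · exact hza (by rw [mul_comm, ← ha, mul_assoc, hyz, hc0])
  · exact hzb (by rw [mul_comm, ← hb, mul_assoc, hyz, hc0])
  · exact hzann (by rw [mul_comm, ← hc', mul_assoc, hyz, hc0])

/-- Under condition (△), every c with N(c) = {a,b} satisfies c² ≠ 0 and Ann(c) = {0, a, b}. -/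
theorem stmt5 {S : Type*} [CommSemigroup S] [Zero S] (hz : ∀ x : S, 0 * x = 0)
    (a b s z : {t : S // IsZeroDivisorElem t})
    (hab : (zdGraph S).Adj a b)
    (hs : (zdGraph S).neighborSet s = {a, b})
    (hd : (zdGraph S).dist s z = 3) :
    ∀ c : {t : S // IsZeroDivisorElem t}, (zdGraph S).neighborSet c = {a, b} →
      (c : S) * (c : S) ≠ 0 ∧
      {x : S | x * (c : S) = 0} = {0, (a : S), (b : S)} := by
  intro c hNc
  have hsa : (zdGraph S).Adj s a := by
    have : a ∈ (zdGraph S).neighborSet s := by rw [hs]; exact Set.mem_insert _ _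
    exact this
  have hsb : (zdGraph S).Adj s b := by
    have : b ∈ (zdGraph S).neighborSet s := by
      rw [hs]; exact Set.mem_insert_iff.mpr (Or.inr rfl)
    exact this
  have hca : (zdGraph S).Adj c a := by
    have : a ∈ (zdGraph S).neighborSet c := by rw [hNc]; exact Set.mem_insert _ _
    exact this
  have hcb : (zdGraph S).Adj c b := by
    have : b ∈ (zdGraph S).neighborSet c := by
      rw [hNc]; exact Set.mem_insert_iff.mpr (Or.inr rfl)
    exact this
  have annC : ∀ w : S, w * (c : S) = 0 → w = 0 ∨ w = (a : S) ∨ w = (b : S) ∨ w = (c : S) := by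
    intro w hw
    by_cases hw0 : w = 0
    · exact Or.inl hw0
    by_cases hwc : w = (c : S)
    · exact Or.inr (Or.inr (Or.inr hwc))
    have hwzd : IsZeroDivisorElem w := ⟨hw0, c, c.2.1, hw⟩
    have hadj : (zdGraph S).Adj c ⟨w, hwzd⟩ :=
      ⟨fun h => hwc (congrArg Subtype.val h).symm, by rw [mul_comm]; exact hw⟩
    have hmem : (⟨w, hwzd⟩ : {t : S // IsZeroDivisorElem t}) ∈ (zdGraph S).neighborSet c := hadj
    rw [hNc] at hmem
    rcases hmem with h | h
    · exact Or.inr (Or.inl (congrArg Subtype.val h))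
    · exact Or.inr (Or.inr (Or.inl (congrArg Subtype.val h)))
  have hdle : ∀ p : (zdGraph S).Walk s z, 3 ≤ p.length := by
    intro p
    rw [← hd]
    exact SimpleGraph.dist_le p
  have hzea : z ≠ a := by
    intro h
    subst h
    have := hdle (SimpleGraph.Walk.cons hsa SimpleGraph.Walk.nil)
    simp at this
  have hzeb : z ≠ b := by
    intro h
    subst h
    have := hdle (SimpleGraph.Walk.cons hsb SimpleGraph.Walk.nil)
    simp at this
  have hza0 : (z : S) * a = 0 → False := by
    intro h
    have hadj : (zdGraph S).Adj a z := ⟨fun e => hzea e.symm, by rw [mul_comm]; exact h⟩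
    have := hdle (SimpleGraph.Walk.cons hsa (SimpleGraph.Walk.cons hadj SimpleGraph.Walk.nil))
    simp at this
  have hzb0 : (z : S) * b = 0 → False := by
    intro h
    have hadj : (zdGraph S).Adj b z := ⟨fun e => hzeb e.symm, by rw [mul_comm]; exact h⟩
    have := hdle (SimpleGraph.Walk.cons hsb (SimpleGraph.Walk.cons hadj SimpleGraph.Walk.nil))
    simp at this
  have hzc : z ≠ c := by
    intro h
    have hadj : (zdGraph S).Adj a z := by rw [h]; exact hca.symm
    have := hdle (SimpleGraph.Walk.cons hsa (SimpleGraph.Walk.cons hadj SimpleGraph.Walk.nil))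
    simp at this
  have hccne : (c : S) * (c : S) ≠ 0 := by
    intro hcc
    obtain ⟨p, hp⟩ := SimpleGraph.exists_walk_of_dist_ne_zero (G := zdGraph S) (u := s) (v := z)
      (by rw [hd]; norm_num)
    rw [hd] at hp
    cases p with
    | nil => simp at hp
    | cons h1 q =>
      cases q with
      | nil => simp at hp
      | cons h2 q2 =>
        cases q2 with
        | nil => simp at hp
        | cons h3 q3 =>
          cases q3 with
          | cons h4 q4 => simp at hp
          | nil =>
            -- h1 : Adj s x1, h2 : Adj x1 x2, h3 : Adj x2 z
            rename_i x1 x2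
            have hx1 : x1 ∈ (zdGraph S).neighborSet s := h1
            rw [hs] at hx1
            have key := fun (u v : {t : S // IsZeroDivisorElem t})
                (huv : (zdGraph S).Adj u v)
                (hNc' : ∀ w : S, w * (c : S) = 0 →
                  w = 0 ∨ w = (u : S) ∨ w = (v : S) ∨ w = (c : S))
                (hx1u : x1 = u)
                (hzu : (z : S) * u = 0 → False) (hzv : (z : S) * v = 0 → False)
                (hzeu : z ≠ u) (hzev : z ≠ v) =>
              keyS hz (u : S) (v : S) (c : S) (x2 : S) (z : S) hNc'
                x2.2.1 z.2.1
                (fun e => (hx1u ▸ h2).1 (Subtype.ext e).symm)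
                h3.2 hzu hzv
                (fun e => hzeu (Subtype.ext e)) (fun e => hzev (Subtype.ext e))
                (fun e => hzc (Subtype.ext e)) hcc
            rcases hx1 with h | h
            · exact key a b (hab) annC h hza0 hzb0 hzea hzeb
            · refine key b a hab.symm ?_ h hzb0 hza0 hzeb hzea
              intro w hw
              rcases annC w hw with h' | h' | h' | h' <;> tauto
  refine ⟨hccne, ?_⟩
  ext x
  simp only [Set.mem_setOf_eq, Set.mem_insert_iff, Set.mem_singleton_iff]
  constructor
  · intro hx
    rcases annC x hx with h | h | h | h
    · exact Or.inl h
    · exact Or.inr (Or.inl h)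
    · exact Or.inr (Or.inr h)
    · exact absurd (h ▸ hx) hccne
  · rintro (rfl | rfl | rfl)
    · exact hz _
    · rw [mul_comm]; exact hca.2
    · rw [mul_comm]; exact hcb.2
end

section
/- Let S be a commutative semigroup with zero and G = Γ(S). Suppose there exist adjacent vertices a, b, a vertex s with N(s) = {a,b}, and a vertex z with d(s,z) = 3. Let L = {y ∈ V(G) : d(s,y) = 3}. Then L is a sub-semigroup of S: for all u, v ∈ L, uv ∈ L (in particular uv ≠ 0). -/
/-- Under condition (△), L = {y : d(s,y) = 3} is a sub-semigroup: products of elements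
of L are again (nonzero) vertices at distance 3 from s. -/
theorem stmt7 {S : Type*} [CommSemigroup S] [Zero S] (hz : ∀ x : S, 0 * x = 0)
    (a b s z : {t : S // IsZeroDivisorElem t})
    (hab : (zdGraph S).Adj a b)
    (hs : (zdGraph S).neighborSet s = {a, b})
    (hd : (zdGraph S).dist s z = 3) :
    ∀ u v : {t : S // IsZeroDivisorElem t},
      (zdGraph S).dist s u = 3 → (zdGraph S).dist s v = 3 →
      ∃ h : IsZeroDivisorElem ((u : S) * (v : S)),
        (zdGraph S).dist s ⟨(u : S) * (v : S), h⟩ = 3 := by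
  classical
  intro u v hu hv
  have hsa : (zdGraph S).Adj s a := by
    have ha : a ∈ (zdGraph S).neighborSet s := by rw [hs]; exact Set.mem_insert _ _
    exact ha
  have hsb : (zdGraph S).Adj s b := by
    have hb : b ∈ (zdGraph S).neighborSet s := by
      rw [hs]; exact Set.mem_insert_iff.mpr (Or.inr rfl)
    exact hb
  have hnb : ∀ x : {t : S // IsZeroDivisorElem t}, (zdGraph S).Adj s x → x = a ∨ x = b := by
    intro x hx
    have hmem : x ∈ (zdGraph S).neighborSet s := hx
    rw [hs] at hmem
    exact hmem
  have hmul0 : ∀ x : S, x * 0 = 0 := fun x => by rw [mul_comm]; exact hz x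
  have has0 : (a : S) * (s : S) = 0 := by rw [mul_comm]; exact hsa.2
  have hbs0 : (b : S) * (s : S) = 0 := by rw [mul_comm]; exact hsb.2
  -- any nonzero annihilator of s is s, a or b
  have ann_s : ∀ e : S, e ≠ 0 → e * (s : S) = 0 → e = (s : S) ∨ e = (a : S) ∨ e = (b : S) := by
    intro e he h0
    by_cases hes : e = (s : S)
    · exact Or.inl hes
    · have hzd : IsZeroDivisorElem e := ⟨he, (s : S), s.2.1, h0⟩
      have hadj : (zdGraph S).Adj s ⟨e, hzd⟩ :=
        ⟨fun hh => hes (congrArg Subtype.val hh).symm, by rw [mul_comm]; exact h0⟩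
      rcases hnb _ hadj with h | h
      · exact Or.inr (Or.inl (congrArg Subtype.val h))
      · exact Or.inr (Or.inr (congrArg Subtype.val h))
  -- key facts about distance-3 vertices
  have key : ∀ w : {t : S // IsZeroDivisorElem t}, (zdGraph S).dist s w = 3 →
      (s : S) * (w : S) ≠ 0 ∧ (a : S) * (w : S) ≠ 0 ∧ (b : S) * (w : S) ≠ 0 := by
    intro w hw
    have hle : ∀ (p : (zdGraph S).Walk s w), 3 ≤ p.length := by
      intro p
      have h := SimpleGraph.dist_le p
      omega
    have hws : w ≠ s := by
      rintro rfl
      rw [SimpleGraph.dist_self] at hw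
      omega
    have hwa : w ≠ a := by
      rintro rfl
      have := hle (SimpleGraph.Walk.cons hsa SimpleGraph.Walk.nil)
      simp at this
    have hwb : w ≠ b := by
      rintro rfl
      have := hle (SimpleGraph.Walk.cons hsb SimpleGraph.Walk.nil)
      simp at this
    refine ⟨?_, ?_, ?_⟩
    · intro h0
      have hadj : (zdGraph S).Adj s w := ⟨fun hh => hws hh.symm, h0⟩
      have := hle (SimpleGraph.Walk.cons hadj SimpleGraph.Walk.nil)
      simp at this
    · intro h0
      have hadj : (zdGraph S).Adj a w := ⟨fun hh => hwa hh.symm, h0⟩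
      have := hle (SimpleGraph.Walk.cons hsa (SimpleGraph.Walk.cons hadj SimpleGraph.Walk.nil))
      simp at this
    · intro h0
      have hadj : (zdGraph S).Adj b w := ⟨fun hh => hwb hh.symm, h0⟩
      have := hle (SimpleGraph.Walk.cons hsb (SimpleGraph.Walk.cons hadj SimpleGraph.Walk.nil))
      simp at this
  obtain ⟨hsu, hau, hbu⟩ := key u hu
  obtain ⟨hsv, hav, hbv⟩ := key v hv
  -- the product is nonzero
  have huv0 : (u : S) * (v : S) ≠ 0 := by
    intro h0
    have hav0 : (a : S) * (v : S) ≠ 0 := hav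
    have h1 : ((a : S) * (v : S)) * (s : S) = 0 := by
      rw [mul_right_comm, has0, hz]
    have h2 : ((a : S) * (v : S)) * (u : S) = 0 := by
      rw [mul_assoc, mul_comm (v : S), h0, hmul0]
    rcases ann_s _ hav0 h1 with h | h | h
    · exact hsu (by rw [← h, h2])
    · exact hau (by rw [← h, h2])
    · exact hbu (by rw [← h, h2])
  -- a * (uv) ≠ 0
  have hauv : (a : S) * ((u : S) * (v : S)) ≠ 0 := by
    intro h0
    have h1 : ((a : S) * (u : S)) * (s : S) = 0 := by
      rw [mul_right_comm, has0, hz]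
    have h2 : ((a : S) * (u : S)) * (v : S) = 0 := by rw [mul_assoc]; exact h0
    rcases ann_s _ hau h1 with h | h | h
    · exact hsv (by rw [← h, h2])
    · exact hav (by rw [← h, h2])
    · exact hbv (by rw [← h, h2])
  -- b * (uv) ≠ 0
  have hbuv : (b : S) * ((u : S) * (v : S)) ≠ 0 := by
    intro h0
    have h1 : ((b : S) * (u : S)) * (s : S) = 0 := by
      rw [mul_right_comm, hbs0, hz]
    have h2 : ((b : S) * (u : S)) * (v : S) = 0 := by rw [mul_assoc]; exact h0
    rcases ann_s _ hbu h1 with h | h | h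
    · exact hsv (by rw [← h, h2])
    · exact hav (by rw [← h, h2])
    · exact hbv (by rw [← h, h2])
  -- uv ≠ s, a, b
  have hWs : (u : S) * (v : S) ≠ (s : S) := by
    intro h
    exact hauv (by rw [h, has0])
  have hWa : (u : S) * (v : S) ≠ (a : S) := by
    intro h
    exact hbuv (by rw [h, mul_comm]; exact hab.2)
  have hWb : (u : S) * (v : S) ≠ (b : S) := by
    intro h
    exact hauv (by rw [h]; exact hab.2)
  -- s * (uv) ≠ 0
  have hsuv : (s : S) * ((u : S) * (v : S)) ≠ 0 := by
    intro h0
    have h0' : ((u : S) * (v : S)) * (s : S) = 0 := by rw [mul_comm]; exact h0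
    rcases ann_s _ huv0 h0' with h | h | h
    · exact hWs h
    · exact hWa h
    · exact hWb h
  -- uv is a zero divisor
  obtain ⟨hu0, y, hy0, huy⟩ := u.2
  have hW : IsZeroDivisorElem ((u : S) * (v : S)) :=
    ⟨huv0, y, hy0, by rw [mul_right_comm, huy, hz]⟩
  refine ⟨hW, ?_⟩
  set W : {t : S // IsZeroDivisorElem t} := ⟨(u : S) * (v : S), hW⟩ with hWdef
  have hWsv : W ≠ s := fun h => hWs (congrArg Subtype.val h)
  -- upper bound: walk of length 3 from s to W
  obtain ⟨p, hp⟩ := SimpleGraph.exists_walk_of_dist_ne_zero (G := zdGraph S) (u := s) (v := u)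
    (by rw [hu]; omega)
  rw [hu] at hp
  have hA1 : (zdGraph S).Adj s (p.getVert 1) := by
    have h := p.adj_getVert_succ (i := 0) (by omega)
    rwa [SimpleGraph.Walk.getVert_zero] at h
  have hA2 : (zdGraph S).Adj (p.getVert 1) (p.getVert 2) := p.adj_getVert_succ (by omega)
  have hA3 : (zdGraph S).Adj (p.getVert 2) u := by
    have h := p.adj_getVert_succ (i := 2) (by omega)
    have h3 : p.getVert 3 = u := by
      have := p.getVert_length
      rwa [hp] at this
    rwa [h3] at h
  have hx2W : ((p.getVert 2) : S) * ((u : S) * (v : S)) = 0 := by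
    rw [← mul_assoc, hA3.2, hz]
  have hx2ne : p.getVert 2 ≠ W := by
    intro h
    have h2 : ((p.getVert 1) : S) * ((u : S) * (v : S)) = 0 := by
      have := hA2.2
      rw [h] at this
      exact this
    rcases hnb _ hA1 with h1 | h1
    · exact hauv (by rw [← h1]; exact h2)
    · exact hbuv (by rw [← h1]; exact h2)
  have hAW : (zdGraph S).Adj (p.getVert 2) W := ⟨hx2ne, hx2W⟩
  have hub : (zdGraph S).dist s W ≤ 3 := by
    have h := SimpleGraph.dist_le
      (SimpleGraph.Walk.cons hA1 (SimpleGraph.Walk.cons hA2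
        (SimpleGraph.Walk.cons hAW SimpleGraph.Walk.nil)))
    simpa using h
  -- lower bound
  have hne0 : (zdGraph S).dist s W ≠ 0 := by
    rw [SimpleGraph.dist_ne_zero_iff_ne_and_reachable]
    exact ⟨fun h => hWsv h.symm,
      SimpleGraph.Walk.reachable (SimpleGraph.Walk.cons hA1 (SimpleGraph.Walk.cons hA2
        (SimpleGraph.Walk.cons hAW SimpleGraph.Walk.nil)))⟩
  have hlb : ¬ (zdGraph S).dist s W < 3 := by
    intro hlt
    obtain ⟨q, hq⟩ := SimpleGraph.exists_walk_of_dist_ne_zero hne0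
    have hq3 : q.length = 1 ∨ q.length = 2 := by omega
    have hqlast : q.getVert q.length = W := q.getVert_length
    rcases hq3 with h1 | h2
    · have hAdj : (zdGraph S).Adj s W := by
        have h := q.adj_getVert_succ (i := 0) (by omega)
        rw [SimpleGraph.Walk.getVert_zero] at h
        have h' : q.getVert (0 + 1) = W := by
          rw [show (0 + 1 : ℕ) = q.length by omega]; exact hqlast
        rwa [h'] at h
      exact hsuv hAdj.2
    · have hB1 : (zdGraph S).Adj s (q.getVert 1) := by
        have h := q.adj_getVert_succ (i := 0) (by omega)
        rwa [SimpleGraph.Walk.getVert_zero] at h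
      have hB2 : (zdGraph S).Adj (q.getVert 1) W := by
        have h := q.adj_getVert_succ (i := 1) (by omega)
        have h' : q.getVert (1 + 1) = W := by
          rw [show (1 + 1 : ℕ) = q.length by omega]; exact hqlast
        rwa [h'] at h
      rcases hnb _ hB1 with h1 | h1
      · exact hauv (by rw [← h1]; exact hB2.2)
      · exact hbuv (by rw [← h1]; exact hB2.2)
  omega
end
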